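/- Let A be an n×n real matrix, B an n×m real matrix, and t > 0. Then the controllability Gramian W(t) = ∫₀ᵗ exp(sA)·B·Bᵀ·exp(sAᵀ) ds (a symmetric positive semidefinite n×n matrix, where exp is the matrix exponential) is positive definite if and only if the pair (A,B) is controllable, i.e. the columns of the block matrix [B, AB, A²B, …, A^{n−1}B] span ℝⁿ. -/

import Mathlib

open Matrix NormedSpace

/-- The controllability Gramian `W(t) = ∫₀ᵗ exp(sA) B Bᵀ exp(sAᵀ) ds`, defined entrywise. -/
noncomputable def gramian (n m : ℕ) (A : Matrix (Fin n) (Fin n) ℝ)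
    (B : Matrix (Fin n) (Fin m) ℝ) (t : ℝ) : Matrix (Fin n) (Fin n) ℝ :=
  Matrix.of fun i j =>
    ∫ s in (0 : ℝ)..t,
      (NormedSpace.exp (s • A) * B * Bᵀ * NormedSpace.exp (s • Aᵀ)) i j

/-- The pair `(A, B)` is controllable: the columns of `[B, AB, …, A^{n−1}B]` span `ℝⁿ`. -/
def IsControllable (n m : ℕ) (A : Matrix (Fin n) (Fin n) ℝ)
    (B : Matrix (Fin n) (Fin m) ℝ) : Prop :=
  Submodule.span ℝ
    (Set.range fun kj : Fin n × Fin m => fun i => (A ^ (kj.1 : ℕ) * B) i kj.2) = ⊤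

variable {n m : ℕ}

lemma cont_exp (A : Matrix (Fin n) (Fin n) ℝ) : Continuous fun s : ℝ => exp (s • A) := by
  letI : NormedRing (Matrix (Fin n) (Fin n) ℝ) := Matrix.linftyOpNormedRing
  letI : NormedAlgebra ℝ (Matrix (Fin n) (Fin n) ℝ) := Matrix.linftyOpNormedAlgebra
  letI : NormedAlgebra ℚ (Matrix (Fin n) (Fin n) ℝ) := Matrix.linftyOpNormedAlgebra
  exact exp_continuous.comp (continuous_id.smul continuous_const)

lemma hasDeriv (M : Matrix (Fin n) (Fin n) ℝ) (c x : Fin n → ℝ) (s : ℝ) :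
    HasDerivAt (fun u : ℝ => c ⬝ᵥ (exp (u • M) *ᵥ x))
      ((c ᵥ* M) ⬝ᵥ (exp (s • M) *ᵥ x)) s := by
  letI : NormedRing (Matrix (Fin n) (Fin n) ℝ) := Matrix.linftyOpNormedRing
  letI : NormedAlgebra ℝ (Matrix (Fin n) (Fin n) ℝ) := Matrix.linftyOpNormedAlgebra
  have hexp : HasDerivAt (fun u : ℝ => exp (u • M)) (M * exp (s • M)) s :=
    hasDerivAt_exp_smul_const' M s
  let L : Matrix (Fin n) (Fin n) ℝ →ₗ[ℝ] ℝ :=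
    { toFun := fun N => c ⬝ᵥ (N *ᵥ x)
      map_add' := fun N₁ N₂ => by simp [Matrix.add_mulVec]
      map_smul' := fun r N => by simp [Matrix.smul_mulVec] }
  have h2 := (L.toContinuousLinearMap.hasFDerivAt
    (x := exp (s • M))).comp_hasDerivAt s hexp
  have h3 : (L.toContinuousLinearMap : _ → ℝ) ∘ (fun u : ℝ => exp (u • M))
      = fun u : ℝ => c ⬝ᵥ (exp (u • M) *ᵥ x) := rfl
  rw [Function.comp_def] at h2
  refine h2.congr_deriv ?_
  symm
  show c ᵥ* M ⬝ᵥ exp (s • M) *ᵥ x = c ⬝ᵥ (M * exp (s • M)) *ᵥ x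
  simp only [dotProduct_mulVec, Matrix.vecMul_vecMul]

open Set in
lemma iter (M : Matrix (Fin n) (Fin n) ℝ) (c x : Fin n → ℝ) {a b : ℝ}
    (h0 : ∀ s ∈ Ioo a b, c ⬝ᵥ (exp (s • M) *ᵥ x) = 0) :
    ∀ k, ∀ s ∈ Ioo a b, (c ᵥ* M ^ k) ⬝ᵥ (exp (s • M) *ᵥ x) = 0 := by
  intro k
  induction k with
  | zero => simpa using h0
  | succ k ih =>
    intro s hs
    have hd := hasDeriv M (c ᵥ* M ^ k) x s
    have hev : (fun u : ℝ => (c ᵥ* M ^ k) ⬝ᵥ (exp (u • M) *ᵥ x)) =ᶠ[nhds s]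
        fun _ => (0 : ℝ) :=
      Filter.eventuallyEq_of_mem (isOpen_Ioo.mem_nhds hs) fun u hu => ih u hu
    have hz : HasDerivAt (fun u : ℝ => (c ᵥ* M ^ k) ⬝ᵥ (exp (u • M) *ᵥ x)) 0 s :=
      (hasDerivAt_const s (0 : ℝ)).congr_of_eventuallyEq hev
    have hu := hd.unique hz
    rwa [Matrix.vecMul_vecMul, ← pow_succ] at hu

lemma vecMul_smul_right (v : Fin n → ℝ) (r : ℝ) {p q : ℕ} (M : Matrix (Fin p) (Fin q) ℝ)
    (w : Fin p → ℝ) : w ᵥ* (r • M) = r • (w ᵥ* M) := by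
  ext j
  simp [Matrix.vecMul, dotProduct, Finset.mul_sum, mul_left_comm]

open Polynomial in
lemma ch (hn : 0 < n) (A : Matrix (Fin n) (Fin n) ℝ) (B : Matrix (Fin n) (Fin m) ℝ)
    (x : Fin n → ℝ) (h : ∀ k < n, x ᵥ* (A ^ k * B) = 0) (k : ℕ) :
    x ᵥ* (A ^ k * B) = 0 := by
  classical
  let L : Matrix (Fin n) (Fin n) ℝ →ₗ[ℝ] (Fin m → ℝ) :=
    { toFun := fun N => x ᵥ* (N * B)
      map_add' := fun N₁ N₂ => by simp [Matrix.add_mul, Matrix.vecMul_add]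
      map_smul' := fun r N => by
        simp only [Matrix.smul_mul, RingHom.id_apply]
        exact vecMul_smul_right x r _ x }
  have hdeg : (X ^ k %ₘ A.charpoly).natDegree < n := by
    rcases eq_or_ne (X ^ k %ₘ A.charpoly) 0 with h0 | h0
    · simpa [h0] using hn
    · have hlt := Polynomial.degree_modByMonic_lt (X ^ k) A.charpoly_monic
      have := Polynomial.natDegree_lt_natDegree h0 hlt
      simpa [Matrix.charpoly_natDegree_eq_dim] using this
  have hAk : A ^ k = ∑ i ∈ Finset.range n, (X ^ k %ₘ A.charpoly).coeff i • A ^ i := by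
    rw [Matrix.pow_eq_aeval_mod_charpoly, Polynomial.aeval_eq_sum_range' hdeg]
  show L (A ^ k) = 0
  rw [hAk, map_sum]
  refine Finset.sum_eq_zero fun i hi => ?_
  rw [LinearMap.map_smul]
  have hLi : L (A ^ i) = x ᵥ* (A ^ i * B) := rfl
  rw [hLi, h i (Finset.mem_range.mp hi), smul_zero]

lemma expzero (A : Matrix (Fin n) (Fin n) ℝ) (B : Matrix (Fin n) (Fin m) ℝ)
    (x : Fin n → ℝ) (h : ∀ k, x ᵥ* (A ^ k * B) = 0) (s : ℝ) :
    x ᵥ* (exp (s • A) * B) = 0 := by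
  letI : NormedRing (Matrix (Fin n) (Fin n) ℝ) := Matrix.linftyOpNormedRing
  letI : NormedAlgebra ℝ (Matrix (Fin n) (Fin n) ℝ) := Matrix.linftyOpNormedAlgebra
  let L : Matrix (Fin n) (Fin n) ℝ →ₗ[ℝ] (Fin m → ℝ) :=
    { toFun := fun N => x ᵥ* (N * B)
      map_add' := fun N₁ N₂ => by simp [Matrix.add_mul, Matrix.vecMul_add]
      map_smul' := fun r N => by
        simp only [Matrix.smul_mul, RingHom.id_apply]
        exact vecMul_smul_right x r _ x }
  have hsum := expSeries_summable' (𝕂 := ℝ) (x := s • A)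
  have hL : x ᵥ* (exp (s • A) * B) = L.toContinuousLinearMap (exp (s • A)) := rfl
  rw [hL, exp_eq_tsum ℝ, L.toContinuousLinearMap.map_tsum hsum]
  have hz : ∀ k : ℕ, L.toContinuousLinearMap (((Nat.factorial k : ℝ))⁻¹ • (s • A) ^ k) = 0 := by
    intro k
    rw [L.toContinuousLinearMap.map_smul]
    have h1 : L.toContinuousLinearMap ((s • A) ^ k) = x ᵥ* ((s • A) ^ k * B) := rfl
    rw [h1, smul_pow, Matrix.smul_mul, vecMul_smul_right x, h k, smul_zero, smul_zero]
  simp only [hz, tsum_zero]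

lemma exists_perp (A : Matrix (Fin n) (Fin n) ℝ) (B : Matrix (Fin n) (Fin m) ℝ)
    (h : ¬ IsControllable n m A B) :
    ∃ x : Fin n → ℝ, x ≠ 0 ∧ ∀ k < n, x ᵥ* (A ^ k * B) = 0 := by
  classical
  obtain ⟨φ, hφ0, hφ⟩ := Submodule.exists_dual_map_eq_bot_of_lt_top
    (lt_top_iff_ne_top.mpr h) inferInstance
  refine ⟨fun i => φ (Pi.single i 1), ?_, ?_⟩
  · intro hx
    apply hφ0
    refine LinearMap.ext fun v => ?_
    show φ v = 0
    have hv : v = ∑ i, v i • (Pi.single i 1 : Fin n → ℝ) := by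
      ext j; simp [Pi.single_apply]
    rw [hv, map_sum]
    simp only [_root_.map_smul, smul_eq_mul]
    have : ∀ i, φ ((Pi.single i 1 : Fin n → ℝ)) = 0 := fun i => congrFun hx i
    simp [this]
  · intro k hk
    ext j
    set w : Fin n → ℝ := fun i => (A ^ k * B) i j with hw
    have hmem : w ∈ Submodule.span ℝ
        (Set.range fun kj : Fin n × Fin m => fun i => (A ^ (kj.1 : ℕ) * B) i kj.2) :=
      Submodule.subset_span ⟨(⟨k, hk⟩, j), rfl⟩
    have hphi : φ w = 0 := by
      have : φ w ∈ Submodule.map φ (Submodule.span ℝ _) :=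
        Submodule.mem_map_of_mem hmem
      rw [hφ] at this
      simpa using this
    have hdecomp : w = ∑ i, w i • (Pi.single i 1 : Fin n → ℝ) := by
      ext l; simp [hw, Pi.single_apply]
    rw [hdecomp, map_sum] at hphi
    simp only [_root_.map_smul, smul_eq_mul] at hphi
    show ∑ i, (fun i => φ (Pi.single i 1)) i * (A ^ k * B) i j = 0
    rw [← hphi]
    exact Finset.sum_congr rfl fun i _ => mul_comm _ _


lemma cont_entry (A : Matrix (Fin n) (Fin n) ℝ) (B : Matrix (Fin n) (Fin m) ℝ) (i j : Fin n) :
    Continuous fun s : ℝ => (exp (s • A) * B * Bᵀ * exp (s • Aᵀ)) i j :=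
  ((((cont_exp A).matrix_mul continuous_const).matrix_mul continuous_const).matrix_mul
    (cont_exp Aᵀ)).matrix_elem i j

open MeasureTheory in
lemma dot_integral (t : ℝ) (M : ℝ → Matrix (Fin n) (Fin n) ℝ)
    (hM : ∀ i j, IntervalIntegrable (fun s => M s i j) volume 0 t)
    (x : Fin n → ℝ) :
    x ⬝ᵥ (Matrix.of fun i j => ∫ s in (0:ℝ)..t, M s i j) *ᵥ x
      = ∫ s in (0:ℝ)..t, x ⬝ᵥ (M s *ᵥ x) := by
  simp only [dotProduct, Matrix.mulVec, Matrix.of_apply]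
  have h1 : ∀ i j, IntervalIntegrable (fun s => M s i j * x j) volume 0 t :=
    fun i j => (hM i j).mul_const (x j)
  have h0 : ∀ i : Fin n, IntervalIntegrable (fun s => ∑ j, M s i j * x j) volume 0 t := by
    intro i
    have h2 := IntervalIntegrable.sum (μ := volume) (a := 0) (b := t) Finset.univ
      (f := fun (j : Fin n) (s : ℝ) => M s i j * x j) (fun j _ => h1 i j)
    have h3 : (∑ j : Fin n, fun s => M s i j * x j) = fun s => ∑ j, M s i j * x j := by
      ext s; simp
    rwa [h3] at h2
  symm
  rw [intervalIntegral.integral_finset_sum (fun i _ => (h0 i).const_mul (x i))]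
  refine Finset.sum_congr rfl fun i _ => ?_
  rw [intervalIntegral.integral_const_mul,
    intervalIntegral.integral_finset_sum (fun j _ => h1 i j)]
  congr 1
  exact Finset.sum_congr rfl fun j _ => intervalIntegral.integral_mul_const _ _

lemma factor (A : Matrix (Fin n) (Fin n) ℝ) (B : Matrix (Fin n) (Fin m) ℝ) (s : ℝ) :
    exp (s • A) * B * Bᵀ * exp (s • Aᵀ)
      = (exp (s • A) * B) * (exp (s • A) * B)ᵀ := by
  have hT : exp (s • Aᵀ) = (exp (s • A))ᵀ := by
    rw [← Matrix.transpose_smul, Matrix.exp_transpose]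
  rw [hT, Matrix.transpose_mul, ← Matrix.mul_assoc]

lemma quadform (A : Matrix (Fin n) (Fin n) ℝ) (B : Matrix (Fin n) (Fin m) ℝ) (s : ℝ)
    (x : Fin n → ℝ) :
    x ⬝ᵥ ((exp (s • A) * B * Bᵀ * exp (s • Aᵀ)) *ᵥ x)
      = ((exp (s • A) * B)ᵀ *ᵥ x) ⬝ᵥ ((exp (s • A) * B)ᵀ *ᵥ x) := by
  rw [factor, ← Matrix.mulVec_mulVec, dotProduct_mulVec, Matrix.mulVec_transpose]

open MeasureTheory in
lemma quad (A : Matrix (Fin n) (Fin n) ℝ) (B : Matrix (Fin n) (Fin m) ℝ) (t : ℝ)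
    (x : Fin n → ℝ) :
    x ⬝ᵥ (gramian n m A B t) *ᵥ x
      = ∫ s in (0:ℝ)..t,
          ((exp (s • A) * B)ᵀ *ᵥ x) ⬝ᵥ ((exp (s • A) * B)ᵀ *ᵥ x) := by
  have h := dot_integral t (fun s => exp (s • A) * B * Bᵀ * exp (s • Aᵀ))
    (fun i j => (cont_entry A B i j).intervalIntegrable 0 t) x
  show x ⬝ᵥ (Matrix.of fun i j => ∫ s in (0:ℝ)..t,
      (exp (s • A) * B * Bᵀ * exp (s • Aᵀ)) i j) *ᵥ x = _
  rw [h]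
  exact intervalIntegral.integral_congr fun s _ => quadform A B s x

lemma herm (A : Matrix (Fin n) (Fin n) ℝ) (B : Matrix (Fin n) (Fin m) ℝ) (t : ℝ) :
    (gramian n m A B t).IsHermitian := by
  have hsym : ∀ s : ℝ, ∀ i j : Fin n,
      (exp (s • A) * B * Bᵀ * exp (s • Aᵀ)) j i
        = (exp (s • A) * B * Bᵀ * exp (s • Aᵀ)) i j := by
    intro s i j
    have h1 : (exp (s • A) * B * Bᵀ * exp (s • Aᵀ))ᵀ
        = exp (s • A) * B * Bᵀ * exp (s • Aᵀ) := by
      rw [factor, Matrix.transpose_mul, Matrix.transpose_transpose]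
    conv_lhs => rw [← h1]
    rw [Matrix.transpose_apply]
  show (gramian n m A B t)ᴴ = gramian n m A B t
  ext i j
  show star ((gramian n m A B t) j i) = (gramian n m A B t) i j
  rw [star_trivial]
  show (∫ s in (0:ℝ)..t, (exp (s • A) * B * Bᵀ * exp (s • Aᵀ)) j i)
    = ∫ s in (0:ℝ)..t, (exp (s • A) * B * Bᵀ * exp (s • Aᵀ)) i j
  exact intervalIntegral.integral_congr fun s _ => hsym s i j


open MeasureTheory Set Function in
/-- **Positive definiteness of the controllability Gramian.** For `t > 0`, the Gramian
`W(t) = ∫₀ᵗ exp(sA) B Bᵀ exp(sAᵀ) ds` is positive definite if and only if the pair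
`(A, B)` is controllable. -/
theorem stmt_5 (n m : ℕ) (A : Matrix (Fin n) (Fin n) ℝ)
    (B : Matrix (Fin n) (Fin m) ℝ) (t : ℝ) (ht : 0 < t) :
    (gramian n m A B t).PosDef ↔ IsControllable n m A B := by
  rcases Nat.eq_zero_or_pos n with hn | hn
  · subst hn
    constructor
    · intro _
      show Submodule.span ℝ _ = ⊤
      have : Subsingleton (Fin 0 → ℝ) := by infer_instance
      apply Submodule.eq_top_iff'.mpr
      intro v
      have : v = 0 := Subsingleton.elim _ _
      rw [this]; exact Submodule.zero_mem _
    · intro _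
      refine ⟨herm A B t, fun x hx => absurd (Subsingleton.elim x 0) hx⟩
  constructor
  · -- PosDef → controllable
    intro hpd
    by_contra hc
    obtain ⟨x, hx0, hperp⟩ := exists_perp A B hc
    have hall : ∀ k, x ᵥ* (A ^ k * B) = 0 := ch hn A B x hperp
    have hzero : ∀ s : ℝ, (exp (s • A) * B)ᵀ *ᵥ x = 0 := by
      intro s
      rw [Matrix.mulVec_transpose]
      exact expzero A B x hall s
    have hq : x ⬝ᵥ (gramian n m A B t) *ᵥ x = 0 := by
      rw [quad A B t x]
      have : ∀ s : ℝ, ((exp (s • A) * B)ᵀ *ᵥ x) ⬝ᵥ ((exp (s • A) * B)ᵀ *ᵥ x) = 0 := by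
        intro s; rw [hzero s]; simp
      simp only [this, intervalIntegral.integral_zero]
    have hlt := hpd.dotProduct_mulVec_pos hx0
    rw [star_trivial, hq] at hlt
    exact lt_irrefl 0 hlt
  · -- controllable → PosDef
    intro hctl
    refine Matrix.PosDef.of_dotProduct_mulVec_pos (herm A B t) fun x hx => ?_
    rw [star_trivial, quad A B t x]
    set f : ℝ → ℝ :=
      fun s => ((exp (s • A) * B)ᵀ *ᵥ x) ⬝ᵥ ((exp (s • A) * B)ᵀ *ᵥ x) with hf
    have hvc : ∀ j : Fin m, Continuous fun s : ℝ => ((exp (s • A) * B)ᵀ *ᵥ x) j := by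
      intro j
      simp only [Matrix.mulVec, dotProduct, Matrix.transpose_apply]
      exact continuous_finset_sum _ fun i _ =>
        (((cont_exp A).matrix_mul continuous_const).matrix_elem i j).mul continuous_const
    have hfc : Continuous f := by
      rw [hf]
      simp only [dotProduct]
      exact continuous_finset_sum _ fun j _ => (hvc j).mul (hvc j)
    have hnn : ∀ s : ℝ, 0 ≤ f s := by
      intro s
      exact Finset.sum_nonneg fun j _ => mul_self_nonneg _
    rw [intervalIntegral.integral_pos_iff_support_of_nonneg_ae
      (Filter.Eventually.of_forall hnn) (hfc.intervalIntegrable 0 t)]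
    refine ⟨ht, ?_⟩
    by_contra hμ
    have h0 : volume (support f ∩ Ioc 0 t) = 0 := by
      simpa using not_lt.mp hμ
    have hF0 : ∀ s ∈ Ioo (0:ℝ) t, f s = 0 := by
      intro s hs
      by_contra hfs
      have hopen : IsOpen (support f) := by
        rw [Function.support_eq_preimage]
        exact isOpen_compl_singleton.preimage hfc
      have hpos := (hopen.inter isOpen_Ioo).measure_pos volume ⟨s, hfs, hs⟩
      have hsub : support f ∩ Ioo (0:ℝ) t ⊆ support f ∩ Ioc 0 t :=
        inter_subset_inter_right _ Ioo_subset_Ioc_self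
      exact absurd (measure_mono_null hsub h0) hpos.ne'
    -- coordinates vanish on the open interval
    have hpsi : ∀ (j : Fin m) (s : ℝ),
        ((exp (s • A) * B)ᵀ *ᵥ x) j
          = (fun i => B i j) ⬝ᵥ (exp (s • Aᵀ) *ᵥ x) := by
      intro j s
      have hT : (exp (s • A))ᵀ = exp (s • Aᵀ) := by
        rw [← Matrix.transpose_smul, Matrix.exp_transpose]
      rw [Matrix.transpose_mul, hT, ← Matrix.mulVec_mulVec]
      simp [Matrix.mulVec, dotProduct, Matrix.transpose_apply]
    have hcoord : ∀ (j : Fin m), ∀ s ∈ Ioo (0:ℝ) t,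
        (fun i => B i j) ⬝ᵥ (exp (s • Aᵀ) *ᵥ x) = 0 := by
      intro j s hs
      have hv0 : (exp (s • A) * B)ᵀ *ᵥ x = 0 :=
        dotProduct_self_eq_zero.mp (hF0 s hs)
      rw [← hpsi j s, hv0]
      rfl
    have hiter := fun j : Fin m => iter Aᵀ (fun i => B i j) x (hcoord j)
    set s₀ : ℝ := t / 2 with hs₀def
    have hs₀ : s₀ ∈ Ioo (0:ℝ) t := ⟨half_pos ht, half_lt_self ht⟩
    set y : Fin n → ℝ := exp (s₀ • Aᵀ) *ᵥ x with hy
    have hygen : ∀ (k : ℕ) (j : Fin m), y ⬝ᵥ (fun i => (A ^ k * B) i j) = 0 := by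
      intro k j
      have h1 := hiter j k s₀ hs₀
      have hcol : A ^ k *ᵥ (fun i => B i j) = fun i => (A ^ k * B) i j := by
        ext i; simp [Matrix.mulVec, dotProduct, Matrix.mul_apply]
      rw [← Matrix.transpose_pow, Matrix.vecMul_transpose, hcol] at h1
      rw [dotProduct_comm]
      exact h1
    -- y is orthogonal to a spanning set, hence y = 0
    have hy0 : y = 0 := by
      let ℓ : (Fin n → ℝ) →ₗ[ℝ] ℝ :=
        { toFun := fun v => y ⬝ᵥ v
          map_add' := fun v w => dotProduct_add y v w
          map_smul' := fun r v => dotProduct_smul r y v }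
      have hle : Submodule.span ℝ
          (Set.range fun kj : Fin n × Fin m => fun i => (A ^ (kj.1 : ℕ) * B) i kj.2)
            ≤ LinearMap.ker ℓ := by
        rw [Submodule.span_le]
        rintro v ⟨⟨k, j⟩, rfl⟩
        exact hygen k j
      rw [hctl] at hle
      have hyy : y ⬝ᵥ y = 0 := hle (Submodule.mem_top (x := y))
      exact dotProduct_self_eq_zero.mp hyy
    -- conclude x = 0, contradiction
    exfalso
    apply hx
    have hinv : exp ((-s₀) • Aᵀ) *ᵥ y = x := by
      rw [hy, Matrix.mulVec_mulVec, ← Matrix.exp_add_of_commute _ _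
        (((Commute.refl Aᵀ).smul_left (-s₀)).smul_right s₀)]
      rw [← add_smul, neg_add_cancel, zero_smul, exp_zero, Matrix.one_mulVec]
    rw [hy0, Matrix.mulVec_zero] at hinv
    exact hinv.symm
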